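/- Let ω ∈ (0,1) be a quadratic irrational and let C be the Ceiling map C(x) = ⌈1/x⌉ − 1/x. Then ω is purely periodic under C (i.e. C^[p](ω) = ω for some integer p ≥ 1) if and only if its Galois conjugate ω' satisfies ω' > 1. -/

import Mathlib

noncomputable def ceilingMap (x : ℝ) : ℝ :=
  open Classical in
  if Irrational x ∧ x ∈ Set.Ioo (0 : ℝ) 1 then ⌈1 / x⌉ - 1 / x else 0

/-- linear integer relation on an irrational forces both coefficients to vanish -/
lemma lin_irr {ω : ℝ} (hirr : Irrational ω) {q r : ℤ} (h : (q : ℝ) * ω + r = 0) :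
    q = 0 ∧ r = 0 := by
  by_cases hq : q = 0
  · refine ⟨hq, ?_⟩
    have : (r : ℝ) = 0 := by simpa [hq] using h
    exact_mod_cast this
  · exfalso
    have hq' : (q : ℝ) ≠ 0 := Int.cast_ne_zero.mpr hq
    have hw : ω = ((-r : ℤ) : ℝ) / ((q : ℤ) : ℝ) := by
      push_cast
      field_simp at h ⊢
      linarith
    exact (irrational_iff_ne_rational ω).mp hirr (-r) q hq hw

lemma other_root_eq {A B C ω r : ℝ} (hA : A ≠ 0)
    (h1 : A * ω ^ 2 + B * ω + C = 0) (h2 : A * r ^ 2 + B * r + C = 0) (hne : r ≠ ω) :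
    r = -B / A - ω := by
  have key : (r - ω) * (A * (r + ω) + B) = 0 := by ring_nf; nlinarith [h1, h2]
  have h3 : A * (r + ω) + B = 0 := by
    rcases mul_eq_zero.mp key with h | h
    · exact absurd (sub_eq_zero.mp h) hne
    · exact h
  field_simp
  linarith

lemma ceilingMap_step {x : ℝ} (hx : Irrational x) (hm : x ∈ Set.Ioo (0 : ℝ) 1) :
    ceilingMap x = (⌈1 / x⌉ : ℝ) - 1 / x ∧ Irrational (ceilingMap x) ∧
      ceilingMap x ∈ Set.Ioo (0 : ℝ) 1 ∧ 2 ≤ ⌈1 / x⌉ := by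
  obtain ⟨hx0, hx1⟩ := hm
  have hxne : x ≠ 0 := ne_of_gt hx0
  have h1x : 1 < 1 / x := by rw [lt_div_iff₀ hx0]; linarith
  have hirr1x : Irrational (1 / x) := by simpa [one_div] using hx.inv
  have heq : ceilingMap x = (⌈1 / x⌉ : ℝ) - 1 / x := by
    rw [ceilingMap, if_pos ⟨hx, hx0, hx1⟩]
  have hceil2 : 2 ≤ ⌈1 / x⌉ := by
    have : (1:ℤ) < ⌈1/x⌉ := Int.lt_ceil.mpr (by exact_mod_cast h1x)
    omega
  have hne : (1 / x) ≠ (⌈1 / x⌉ : ℝ) := hirr1x.ne_int _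
  have hlt : (⌈1/x⌉ : ℝ) - 1/x < 1 := by
    have := Int.ceil_lt_add_one (1/x)
    linarith
  have hgt : 0 < (⌈1/x⌉ : ℝ) - 1/x := by
    have := Int.le_ceil (1/x)
    rcases lt_or_eq_of_le this with h | h
    · linarith
    · exact absurd h hne
  have hirrC : Irrational ((⌈1/x⌉ : ℝ) - 1/x) := hirr1x.intCast_sub _
  exact ⟨heq, heq ▸ hirrC, heq ▸ ⟨hgt, hlt⟩, hceil2⟩

/-- coefficient triples along the orbit -/
noncomputable def ceilTri (ω : ℝ) (t0 : ℤ × ℤ × ℤ) : ℕ → ℤ × ℤ × ℤ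
  | 0 => t0
  | k + 1 =>
    let t := ceilTri ω t0 k
    let n : ℤ := ⌈1 / (ceilingMap^[k] ω)⌉
    (t.2.2, -t.2.1 - 2 * t.2.2 * n, t.1 + t.2.1 * n + t.2.2 * n ^ 2)

/-- Galois conjugate along the orbit -/
noncomputable def ceilConj (ω : ℝ) (t0 : ℤ × ℤ × ℤ) (k : ℕ) : ℝ :=
  -((ceilTri ω t0 k).2.1 : ℝ) / ((ceilTri ω t0 k).1 : ℝ) - ceilingMap^[k] ω

lemma conj_root {A B : ℝ} {C ω : ℝ} (hA : A ≠ 0) (h : A * ω ^ 2 + B * ω + C = 0) :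
    A * (-B / A - ω) ^ 2 + B * (-B / A - ω) + C = 0 := by
  field_simp
  linear_combination A * h

lemma ceilTri_succ (ω : ℝ) (t0 : ℤ × ℤ × ℤ) (k : ℕ) :
    ceilTri ω t0 (k+1) =
      ((ceilTri ω t0 k).2.2,
       -(ceilTri ω t0 k).2.1 - 2 * (ceilTri ω t0 k).2.2 * ⌈1 / (ceilingMap^[k] ω)⌉,
       (ceilTri ω t0 k).1 + (ceilTri ω t0 k).2.1 * ⌈1 / (ceilingMap^[k] ω)⌉
         + (ceilTri ω t0 k).2.2 * ⌈1 / (ceilingMap^[k] ω)⌉ ^ 2) := rfl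


lemma ceil_inv (ω : ℝ) (t0 : ℤ × ℤ × ℤ) (hirr : Irrational ω) (hmem : ω ∈ Set.Ioo (0:ℝ) 1)
    (h0 : t0.1 ≠ 0)
    (hq : (t0.1 : ℝ) * ω ^ 2 + (t0.2.1 : ℝ) * ω + (t0.2.2 : ℝ) = 0) :
    ∀ k, Irrational (ceilingMap^[k] ω) ∧ ceilingMap^[k] ω ∈ Set.Ioo (0:ℝ) 1 ∧
      (ceilTri ω t0 k).1 ≠ 0 ∧
      ((ceilTri ω t0 k).1 : ℝ) * (ceilingMap^[k] ω) ^ 2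
        + ((ceilTri ω t0 k).2.1 : ℝ) * (ceilingMap^[k] ω) + ((ceilTri ω t0 k).2.2 : ℝ) = 0 := by
  intro k
  induction k with
  | zero => exact ⟨hirr, hmem, h0, by simpa [ceilTri] using hq⟩
  | succ k ih =>
    obtain ⟨hi, hm, hA, hquad⟩ := ih
    obtain ⟨heq, hi', hm', hn2⟩ := ceilingMap_step hi hm
    set x := ceilingMap^[k] ω with hxdef
    obtain ⟨A, B, C⟩ : ∃ p : ℤ × ℤ × ℤ, p = ceilTri ω t0 k := ⟨_, rfl⟩
    have hsucc : ceilingMap^[k+1] ω = (⌈1/x⌉ : ℝ) - 1/x := by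
      rw [Function.iterate_succ_apply', heq]
    have hxne : x ≠ 0 := ne_of_gt hm.1
    have hC : (ceilTri ω t0 k).2.2 ≠ 0 := by
      intro h
      have h2 : x * (((ceilTri ω t0 k).1 : ℝ) * x + ((ceilTri ω t0 k).2.1 : ℝ)) = 0 := by
        rw [h] at hquad; push_cast at hquad; linarith [hquad]
      have h3 : ((ceilTri ω t0 k).1 : ℝ) * x + ((ceilTri ω t0 k).2.1 : ℝ) = 0 :=
        (mul_eq_zero.mp h2).resolve_left hxne
      exact hA (lin_irr hi h3).1
    refine ⟨hsucc ▸ (heq ▸ hi'), hsucc ▸ (heq ▸ hm'), ?_, ?_⟩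
    · rw [ceilTri_succ]; exact hC
    · rw [ceilTri_succ, hsucc]
      push_cast
      set Ar := ((ceilTri ω t0 k).1 : ℝ)
      set Br := ((ceilTri ω t0 k).2.1 : ℝ)
      set Cr := ((ceilTri ω t0 k).2.2 : ℝ)
      set nr := ((⌈1/x⌉ : ℤ) : ℝ)
      have key : (Cr * (nr - 1/x) ^ 2 + (-Br - 2*Cr*nr) * (nr - 1/x) + (Ar + Br*nr + Cr*nr^2))
          * x ^ 2 = Ar * x ^ 2 + Br * x + Cr := by
        field_simp
        ring
      have hx2 : x ^ 2 ≠ 0 := pow_ne_zero _ hxne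
      have := hquad
      have hz : (Cr * (nr - 1/x) ^ 2 + (-Br - 2*Cr*nr) * (nr - 1/x) + (Ar + Br*nr + Cr*nr^2)) = 0 := by
        have h4 : (Cr * (nr - 1/x) ^ 2 + (-Br - 2*Cr*nr) * (nr - 1/x) + (Ar + Br*nr + Cr*nr^2)) * x^2 = 0 := by
          rw [key]; exact hquad
        exact (mul_eq_zero.mp h4).resolve_right hx2
      linarith [hz]

lemma quad_transform {A B C n x : ℝ} (hx : x ≠ 0) (h : A*x^2 + B*x + C = 0) :
    C*(n - 1/x)^2 + (-B - 2*C*n)*(n - 1/x) + (A + B*n + C*n^2) = 0 := by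
  have key : (C*(n - 1/x)^2 + (-B - 2*C*n)*(n - 1/x) + (A + B*n + C*n^2)) * x^2
      = A*x^2 + B*x + C := by field_simp; ring
  have h4 : (C*(n - 1/x)^2 + (-B - 2*C*n)*(n - 1/x) + (A + B*n + C*n^2)) * x^2 = 0 := by
    rw [key]; exact h
  exact (mul_eq_zero.mp h4).resolve_right (pow_ne_zero _ hx)

lemma conj_irr {A B : ℤ} {ω : ℝ} (hirr : Irrational ω) :
    Irrational (-(B:ℝ)/(A:ℝ) - ω) := by
  have : (-(B:ℝ)/(A:ℝ)) = (((-B/A : ℚ)):ℝ) := by push_cast; ring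
  rw [this]
  exact hirr.ratCast_sub _

lemma conj_ne {A B : ℤ} (hA : A ≠ 0) {ω : ℝ} (hirr : Irrational ω) :
    -(B:ℝ)/(A:ℝ) - ω ≠ ω := by
  intro h
  have hA' : (A:ℝ) ≠ 0 := Int.cast_ne_zero.mpr hA
  have hlin : ((2*A : ℤ):ℝ) * ω + (B:ℤ) = 0 := by
    push_cast
    field_simp at h
    linarith
  have := (lin_irr hirr hlin).1
  omega

lemma conj_unique {A1 B1 C1 A2 B2 C2 : ℤ} {ω : ℝ} (hirr : Irrational ω)
    (hA1 : A1 ≠ 0) (hA2 : A2 ≠ 0)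
    (h1 : (A1:ℝ)*ω^2 + (B1:ℝ)*ω + (C1:ℝ) = 0)
    (h2 : (A2:ℝ)*ω^2 + (B2:ℝ)*ω + (C2:ℝ) = 0) :
    -(B1:ℝ)/(A1:ℝ) = -(B2:ℝ)/(A2:ℝ) := by
  have hlin : ((A2*B1 - A1*B2 : ℤ):ℝ) * ω + ((A2*C1 - A1*C2 : ℤ):ℝ) = 0 := by
    push_cast
    linear_combination (A2:ℝ) * h1 - (A1:ℝ) * h2
  have hB := (lin_irr hirr hlin).1
  have hBeq : A2*B1 = A1*B2 := by omega
  have hA1' : (A1:ℝ) ≠ 0 := Int.cast_ne_zero.mpr hA1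
  have hA2' : (A2:ℝ) ≠ 0 := Int.cast_ne_zero.mpr hA2
  field_simp
  have : ((A2*B1 : ℤ):ℝ) = ((A1*B2 : ℤ):ℝ) := by exact_mod_cast hBeq
  push_cast at this
  linarith

lemma ceilConj_spec (ω : ℝ) (t0 : ℤ × ℤ × ℤ) (hirr : Irrational ω)
    (hmem : ω ∈ Set.Ioo (0:ℝ) 1) (h0 : t0.1 ≠ 0)
    (hq : (t0.1 : ℝ) * ω ^ 2 + (t0.2.1 : ℝ) * ω + (t0.2.2 : ℝ) = 0) (k : ℕ) :
    Irrational (ceilConj ω t0 k) ∧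
    ((ceilTri ω t0 k).1 : ℝ) * (ceilConj ω t0 k) ^ 2
      + ((ceilTri ω t0 k).2.1 : ℝ) * (ceilConj ω t0 k) + ((ceilTri ω t0 k).2.2 : ℝ) = 0 ∧
    ceilConj ω t0 k ≠ ceilingMap^[k] ω := by
  obtain ⟨hi, hm, hA, hquad⟩ := ceil_inv ω t0 hirr hmem h0 hq k
  have hA' : ((ceilTri ω t0 k).1 : ℝ) ≠ 0 := Int.cast_ne_zero.mpr hA
  exact ⟨conj_irr hi, conj_root hA' hquad, conj_ne hA hi⟩

lemma ceilConj_succ (ω : ℝ) (t0 : ℤ × ℤ × ℤ) (hirr : Irrational ω)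
    (hmem : ω ∈ Set.Ioo (0:ℝ) 1) (h0 : t0.1 ≠ 0)
    (hq : (t0.1 : ℝ) * ω ^ 2 + (t0.2.1 : ℝ) * ω + (t0.2.2 : ℝ) = 0) (k : ℕ) :
    ceilConj ω t0 (k+1) = ((⌈1/(ceilingMap^[k] ω)⌉ : ℤ) : ℝ) - 1/(ceilConj ω t0 k) := by
  obtain ⟨hi, hm, hA, hquad⟩ := ceil_inv ω t0 hirr hmem h0 hq k
  obtain ⟨hi1, hm1, hA1, hquad1⟩ := ceil_inv ω t0 hirr hmem h0 hq (k+1)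
  obtain ⟨hyi, hyq, hyne⟩ := ceilConj_spec ω t0 hirr hmem h0 hq k
  obtain ⟨heq, _, _, _⟩ := ceilingMap_step hi hm
  set x := ceilingMap^[k] ω with hxdef
  set y := ceilConj ω t0 k with hydef
  set n : ℤ := ⌈1/x⌉ with hndef
  have hyne0 : y ≠ 0 := hyi.ne_zero
  have hxne0 : x ≠ 0 := ne_of_gt hm.1
  have hsucc : ceilingMap^[k+1] ω = (n : ℝ) - 1/x := by
    rw [Function.iterate_succ_apply', heq]
  have hA1' : ((ceilTri ω t0 (k+1)).1 : ℝ) ≠ 0 := Int.cast_ne_zero.mpr hA1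
  -- r := n - 1/y is a root of the (k+1)-st quadratic
  have hrq : ((ceilTri ω t0 (k+1)).1 : ℝ) * ((n:ℝ) - 1/y) ^ 2
      + ((ceilTri ω t0 (k+1)).2.1 : ℝ) * ((n:ℝ) - 1/y) + ((ceilTri ω t0 (k+1)).2.2 : ℝ) = 0 := by
    have := quad_transform (n := (n:ℝ)) hyne0 hyq
    rw [ceilTri_succ]
    push_cast
    push_cast at this
    linarith
  have hrne : (n:ℝ) - 1/y ≠ ceilingMap^[k+1] ω := by
    rw [hsucc]
    intro h
    have : 1/y = 1/x := by linarith
    exact hyne (by field_simp at this; linarith [this])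
  have := other_root_eq hA1' hquad1 hrq hrne
  rw [ceilConj]
  exact this.symm

lemma forward_dir (ω : ℝ) (hmem : ω ∈ Set.Ioo (0 : ℝ) 1) (hirr : Irrational ω)
    (a b c : ℤ) (ha : a ≠ 0)
    (hroot : (a : ℝ) * ω ^ 2 + (b : ℝ) * ω + (c : ℝ) = 0)
    (p : ℕ) (hp : 1 ≤ p) (hper : ceilingMap^[p] ω = ω) :
    1 < -(b : ℝ) / (a : ℝ) - ω := by
  set t0 : ℤ × ℤ × ℤ := (a, b, c) with ht0
  have h0 : t0.1 ≠ 0 := ha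
  have hq : (t0.1 : ℝ) * ω ^ 2 + (t0.2.1 : ℝ) * ω + (t0.2.2 : ℝ) = 0 := hroot
  set om : ℕ → ℝ := fun k => ceilingMap^[k] ω with homdef
  set y : ℕ → ℝ := fun k => ceilConj ω t0 k with hydef
  have hinv := ceil_inv ω t0 hirr hmem h0 hq
  have hspec := ceilConj_spec ω t0 hirr hmem h0 hq
  have hy0 : y 0 = -(b : ℝ) / (a : ℝ) - ω := by
    simp [hydef, ceilConj, ceilTri, ht0]
  have hnk : ∀ k, 2 ≤ ⌈1/(om k)⌉ := fun k =>
    (ceilingMap_step (hinv k).1 (hinv k).2.1).2.2.2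
  have homs : ∀ k, om (k+1) = ((⌈1/(om k)⌉ : ℤ) : ℝ) - 1/(om k) := by
    intro k
    have := (ceilingMap_step (hinv k).1 (hinv k).2.1).1
    simpa [homdef, Function.iterate_succ_apply'] using this
  have hys : ∀ k, y (k+1) = ((⌈1/(om k)⌉ : ℤ) : ℝ) - 1/(y k) :=
    fun k => ceilConj_succ ω t0 hirr hmem h0 hq k
  have homp : om p = om 0 := by simp [homdef, hper]
  -- y p = y 0
  have hyp : y p = y 0 := by
    have hq0 := (hinv 0).2.2.2
    have hqp := (hinv p).2.2.2
    rw [show (ceilingMap^[p] ω) = ceilingMap^[0] ω from homp] at hqp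
    have := conj_unique (hinv 0).1 (hinv p).2.2.1 (hinv 0).2.2.1 hqp hq0
    have hmp : ceilingMap^[p] ω = ceilingMap^[0] ω := homp
    simp only [hydef, ceilConj]
    rw [this, hmp]
  -- y 0 is irrational, hence ≠ 0, 1
  have hy0i : Irrational (y 0) := (hspec 0).1
  -- key: if y (k+1) < 1 then y k ∈ (0,1)
  have hback : ∀ k, y (k+1) < 1 → 0 < y k ∧ y k < 1 := by
    intro k h
    have h2 : (2:ℝ) ≤ ((⌈1/(om k)⌉ : ℤ) : ℝ) := by exact_mod_cast hnk k
    rw [hys k] at h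
    have h3 : 1 < 1 / y k := by linarith
    have hypos : 0 < y k := by
      by_contra hne
      push_neg at hne
      have : 1 / y k ≤ 0 := one_div_nonpos.mpr hne
      linarith
    constructor
    · exact hypos
    · rw [lt_div_iff₀ hypos] at h3
      linarith
  rcases lt_trichotomy (y 0) 0 with hneg | hzero | hposy
  · -- y0 < 0 : then y k > 1 for k ≥ 1, contradicting y p = y 0
    exfalso
    have h1 : ∀ k, 1 ≤ k → 1 < y k := by
      intro k hk
      induction k with
      | zero => omega
      | succ k ih =>
        rcases Nat.eq_zero_or_pos k with rfl | hk'
        · rw [hys 0]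
          have h2 : (2:ℝ) ≤ ((⌈1/(om 0)⌉ : ℤ) : ℝ) := by exact_mod_cast hnk 0
          have : 1 / y 0 < 0 := one_div_neg.mpr hneg
          linarith
        · have hyk := ih hk'
          rw [hys k]
          have h2 : (2:ℝ) ≤ ((⌈1/(om k)⌉ : ℤ) : ℝ) := by exact_mod_cast hnk k
          have hposk : 0 < y k := by linarith
          have hd1 : 0 < 1 / y k := by positivity
          have hd2 : 1 / y k < 1 := by rw [div_lt_one hposk]; linarith
          linarith
    have := h1 p hp
    rw [hyp] at this
    linarith
  · exact absurd hzero hy0i.ne_zero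
  · rcases lt_trichotomy (y 0) 1 with hlt | heq1 | hgt
    · -- 0 < y 0 < 1 : product argument gives a contradiction
      exfalso
      have hall : ∀ j, j ≤ p → 0 < y (p - j) ∧ y (p - j) < 1 := by
        intro j hj
        induction j with
        | zero => rw [Nat.sub_zero, hyp]; exact ⟨hposy, hlt⟩
        | succ j ih =>
          have hprev := ih (by omega)
          have hidx : p - j = (p - (j+1)) + 1 := by omega
          rw [hidx] at hprev
          exact hback _ hprev.2
      have hallk : ∀ k, k ≤ p → 0 < y k ∧ y k < 1 := by
        intro k hk
        have := hall (p - k) (by omega)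
        rwa [show p - (p - k) = k by omega] at this
      have htel : ∀ k, (om k - y k) * (∏ j ∈ Finset.range k, (om j * y j)) = om 0 - y 0 := by
        intro k
        induction k with
        | zero => simp
        | succ k ih =>
          have hx0 : om k ≠ 0 := ne_of_gt (hinv k).2.1.1
          have hy0' : y k ≠ 0 := (hspec k).1.ne_zero
          have hbr : (1/(y k) - 1/(om k)) * (om k * y k) = om k - y k := by
            field_simp
          rw [Finset.prod_range_succ, homs k, hys k, ← ih]
          linear_combination (∏ j ∈ Finset.range k, (om j * y j)) * hbr
      have hPpos : ∀ q, q ≤ p → 0 < ∏ j ∈ Finset.range q, (om j * y j) := by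
        intro q hq
        exact Finset.prod_pos (fun j hj => mul_pos (hinv j).2.1.1
          (hallk j (by have := Finset.mem_range.mp hj; omega)).1)
      have hPlt : ∀ q, q ≤ p → 1 ≤ q → (∏ j ∈ Finset.range q, (om j * y j)) < 1 := by
        intro q hq hq1
        induction q with
        | zero => omega
        | succ q ih =>
          rw [Finset.prod_range_succ]
          have h1 := (hinv q).2.1
          have h2 := hallk q (by omega)
          have hfac1 : 0 < om q * y q := mul_pos h1.1 h2.1
          have hfac2 : om q * y q < 1 := by nlinarith [h1.1, h1.2, h2.1, h2.2]
          rcases Nat.eq_zero_or_pos q with rfl | hq'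
          · simpa using hfac2
          · have hPq := ih (by omega) hq'
            have hPqpos := hPpos q (by omega)
            nlinarith
      have htp := htel p
      rw [homp, hyp] at htp
      have hne : om 0 - y 0 ≠ 0 := by
        have := (hspec 0).2.2
        intro h
        exact this (by linarith)
      have h5 : (om 0 - y 0) * ((∏ j ∈ Finset.range p, (om j * y j)) - 1) = 0 := by
        linear_combination htp
      rcases mul_eq_zero.mp h5 with h | h
      · exact hne h
      · have := hPlt p le_rfl hp
        linarith
    · exact absurd heq1 hy0i.ne_one
    · rw [← hy0]; exact hgt

set_option maxHeartbeats 2000000 in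
lemma backward_dir (ω : ℝ) (hmem : ω ∈ Set.Ioo (0 : ℝ) 1) (hirr : Irrational ω)
    (a b c : ℤ) (ha : a ≠ 0)
    (hroot : (a : ℝ) * ω ^ 2 + (b : ℝ) * ω + (c : ℝ) = 0)
    (hconj : 1 < -(b : ℝ) / (a : ℝ) - ω) :
    ∃ p : ℕ, 1 ≤ p ∧ ceilingMap^[p] ω = ω := by
  obtain ⟨t0, hapos, hq, hconj0⟩ :
      ∃ t0 : ℤ × ℤ × ℤ, 0 < t0.1 ∧
        ((t0.1 : ℝ) * ω ^ 2 + (t0.2.1 : ℝ) * ω + (t0.2.2 : ℝ) = 0) ∧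
        -(t0.2.1 : ℝ) / (t0.1 : ℝ) = -(b : ℝ) / (a : ℝ) := by
    rcases lt_or_ge 0 a with h | h
    · exact ⟨(a, b, c), h, hroot, rfl⟩
    · have ha2 : a < 0 := lt_of_le_of_ne h ha
      refine ⟨(-a, -b, -c), by simp; omega, by push_cast; linarith, ?_⟩
      have ha' : (a:ℝ) ≠ 0 := Int.cast_ne_zero.mpr ha
      show -((-b : ℤ):ℝ) / ((-a : ℤ):ℝ) = -(b : ℝ) / (a : ℝ)
      push_cast
      rw [neg_neg, div_neg, neg_div]
  have h0 : t0.1 ≠ 0 := ne_of_gt hapos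
  set om : ℕ → ℝ := fun k => ceilingMap^[k] ω with homdef
  set y : ℕ → ℝ := fun k => ceilConj ω t0 k with hydef
  have hinv := ceil_inv ω t0 hirr hmem h0 hq
  have hspec := ceilConj_spec ω t0 hirr hmem h0 hq
  have hy0 : y 0 = -(b : ℝ) / (a : ℝ) - ω := by
    rw [hydef]
    show -((ceilTri ω t0 0).2.1 : ℝ) / ((ceilTri ω t0 0).1 : ℝ) - ceilingMap^[0] ω = _
    rw [show ceilTri ω t0 0 = t0 from rfl, hconj0]
    simp
  have hnk : ∀ k, 2 ≤ ⌈1/(om k)⌉ := fun k =>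
    (ceilingMap_step (hinv k).1 (hinv k).2.1).2.2.2
  have homs : ∀ k, om (k+1) = ((⌈1/(om k)⌉ : ℤ) : ℝ) - 1/(om k) := by
    intro k
    have := (ceilingMap_step (hinv k).1 (hinv k).2.1).1
    simpa [homdef, Function.iterate_succ_apply'] using this
  have hys : ∀ k, y (k+1) = ((⌈1/(om k)⌉ : ℤ) : ℝ) - 1/(y k) :=
    fun k => ceilConj_succ ω t0 hirr hmem h0 hq k
  -- extended invariant: y k > 1 and leading coefficient positive
  have hext : ∀ k, 1 < y k ∧ 0 < (ceilTri ω t0 k).1 := by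
    intro k
    induction k with
    | zero => exact ⟨by rw [hy0]; exact hconj, hapos⟩
    | succ k ih =>
      obtain ⟨hy1, hA⟩ := ih
      have hyk1 : 1 < y (k+1) := by
        rw [hys k]
        have h2 : (2:ℝ) ≤ ((⌈1/(om k)⌉ : ℤ) : ℝ) := by exact_mod_cast hnk k
        have hyp : (0:ℝ) < y k := by linarith
        have hd1 : 0 < 1 / y k := by positivity
        have hd2 : 1 / y k < 1 := by rw [div_lt_one hyp]; linarith
        linarith
      refine ⟨hyk1, ?_⟩
      -- new leading coeff is C_k = A_k * om k * y k > 0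
      have hqx := (hinv k).2.2.2
      have hqy := (hspec k).2.1
      have hne : y k ≠ om k := (hspec k).2.2
      have hsum : ((ceilTri ω t0 k).1 : ℝ) * (om k + y k) + ((ceilTri ω t0 k).2.1 : ℝ) = 0 := by
        have key : (om k - y k) * (((ceilTri ω t0 k).1 : ℝ) * (om k + y k)
            + ((ceilTri ω t0 k).2.1 : ℝ)) = 0 := by
          linear_combination hqx - hqy
        exact (mul_eq_zero.mp key).resolve_left (sub_ne_zero.mpr (Ne.symm hne))
      have hCr : ((ceilTri ω t0 k).2.2 : ℝ)
          = ((ceilTri ω t0 k).1 : ℝ) * (om k * y k) := by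
        linear_combination hqx - (om k) * hsum
      have hApos : (0:ℝ) < ((ceilTri ω t0 k).1 : ℝ) := by exact_mod_cast hA
      have hompos := (hinv k).2.1.1
      have hCpos : (0:ℝ) < ((ceilTri ω t0 k).2.2 : ℝ) := by
        rw [hCr]; positivity
      rw [ceilTri_succ]
      exact_mod_cast hCpos
  -- Vieta relations
  have hvieta : ∀ k, (((ceilTri ω t0 k).1 : ℝ) * (om k + y k) + ((ceilTri ω t0 k).2.1 : ℝ) = 0)
      ∧ ((ceilTri ω t0 k).2.2 : ℝ) = ((ceilTri ω t0 k).1 : ℝ) * (om k * y k) := by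
    intro k
    have hqx := (hinv k).2.2.2
    have hqy := (hspec k).2.1
    have hne : y k ≠ om k := (hspec k).2.2
    have hsum : ((ceilTri ω t0 k).1 : ℝ) * (om k + y k) + ((ceilTri ω t0 k).2.1 : ℝ) = 0 := by
      have key : (om k - y k) * (((ceilTri ω t0 k).1 : ℝ) * (om k + y k)
          + ((ceilTri ω t0 k).2.1 : ℝ)) = 0 := by
        linear_combination hqx - hqy
      exact (mul_eq_zero.mp key).resolve_left (sub_ne_zero.mpr (Ne.symm hne))
    exact ⟨hsum, by linear_combination hqx - (om k) * hsum⟩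
  -- discriminant is constant
  set D : ℤ := t0.2.1^2 - 4*t0.1*t0.2.2 with hD
  have hdisc : ∀ k, (ceilTri ω t0 k).2.1^2 - 4*(ceilTri ω t0 k).1*(ceilTri ω t0 k).2.2 = D := by
    intro k
    induction k with
    | zero => rfl
    | succ k ih =>
      rw [ceilTri_succ]
      dsimp only
      linear_combination ih
  have hDpos : 1 ≤ D := by
    have h1 := (hvieta 0).1
    have h2 := (hvieta 0).2
    have hne : y 0 ≠ om 0 := (hspec 0).2.2
    have hDr : (D:ℝ) = (((ceilTri ω t0 0).1:ℝ) * (om 0 - y 0))^2 := by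
      rw [show D = (ceilTri ω t0 0).2.1^2 - 4*(ceilTri ω t0 0).1*(ceilTri ω t0 0).2.2 from rfl]
      push_cast
      linear_combination (((ceilTri ω t0 0).2.1:ℝ) - ((ceilTri ω t0 0).1:ℝ)*(om 0 + y 0)) * h1
        - 4*((ceilTri ω t0 0).1:ℝ) * h2
    have hAne : (((ceilTri ω t0 0).1:ℝ)) ≠ 0 := Int.cast_ne_zero.mpr h0
    have hsub : om 0 - y 0 ≠ 0 := sub_ne_zero.mpr (fun h => hne h.symm)
    have hprod : ((ceilTri ω t0 0).1:ℝ) * (om 0 - y 0) ≠ 0 := mul_ne_zero hAne hsub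
    have hpos : (0:ℝ) < (D:ℝ) := by
      rw [hDr]
      exact lt_of_le_of_ne (sq_nonneg _) (Ne.symm (pow_ne_zero 2 hprod))
    have : (0:ℤ) < D := by exact_mod_cast hpos
    omega
  -- bounds on the coefficients
  have hbound : ∀ k, 1 ≤ (ceilTri ω t0 k).1 ∧ (ceilTri ω t0 k).1 ≤ D
      ∧ 1 ≤ (ceilTri ω t0 k).2.2 ∧ (ceilTri ω t0 k).2.2 ≤ D
      ∧ -(D + 4*D*D) ≤ (ceilTri ω t0 k).2.1 ∧ (ceilTri ω t0 k).2.1 ≤ D + 4*D*D := by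
    intro k
    have hA1 : 1 ≤ (ceilTri ω t0 k).1 := (hext k).2
    have hC1 : 1 ≤ (ceilTri ω t0 k).2.2 := by
      have := (hext (k+1)).2
      rw [ceilTri_succ] at this
      exact this
    have hS : (ceilTri ω t0 k).1 + (ceilTri ω t0 k).2.1 + (ceilTri ω t0 k).2.2 ≤ -1 := by
      have h1 := (hvieta k).1
      have h2 := (hvieta k).2
      have hSr : ((ceilTri ω t0 k).1:ℝ) + ((ceilTri ω t0 k).2.1:ℝ) + ((ceilTri ω t0 k).2.2:ℝ)
          = ((ceilTri ω t0 k).1:ℝ) * ((1 - om k) * (1 - y k)) := by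
        linear_combination h1 + h2
      have hApos : (0:ℝ) < ((ceilTri ω t0 k).1:ℝ) := by exact_mod_cast lt_of_lt_of_le zero_lt_one hA1
      have hx1 : om k < 1 := (hinv k).2.1.2
      have hy1 : 1 < y k := (hext k).1
      have hneg : ((ceilTri ω t0 k).1:ℝ) * ((1 - om k) * (1 - y k)) < 0 :=
        mul_neg_of_pos_of_neg hApos (mul_neg_of_pos_of_neg (by linarith) (by linarith))
      have : ((ceilTri ω t0 k).1:ℝ) + ((ceilTri ω t0 k).2.1:ℝ) + ((ceilTri ω t0 k).2.2:ℝ) < 0 := by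
        rw [hSr]; exact hneg
      have : (ceilTri ω t0 k).1 + (ceilTri ω t0 k).2.1 + (ceilTri ω t0 k).2.2 < 0 := by
        exact_mod_cast this
      omega
    have hDk := hdisc k
    set A := (ceilTri ω t0 k).1
    set B := (ceilTri ω t0 k).2.1
    set C := (ceilTri ω t0 k).2.2
    have hBsq : B^2 ≥ (A + C + 1)^2 := by
      nlinarith [mul_nonneg (by linarith : (0:ℤ) ≤ A + C + 1 - B) (by linarith : (0:ℤ) ≤ -(B + A + C + 1))]
    have hAD : A ≤ D := by nlinarith [sq_nonneg (A - C)]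
    have hCD : C ≤ D := by nlinarith [sq_nonneg (A - C)]
    have hB2 : B^2 ≤ D + 4*D*D := by nlinarith
    refine ⟨hA1, hAD, hC1, hCD, ?_, ?_⟩
    · nlinarith [sq_nonneg (B + (D + 4*D*D))]
    · nlinarith [sq_nonneg (B - (D + 4*D*D))]
  -- pigeonhole
  have hmaps : ∀ k : ℕ, ceilTri ω t0 k ∈
      Set.Icc ((-(D + 4*D*D), -(D + 4*D*D), -(D + 4*D*D)) : ℤ × ℤ × ℤ)
        ((D + 4*D*D, D + 4*D*D, D + 4*D*D) : ℤ × ℤ × ℤ) := by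
    intro k
    obtain ⟨h1, h2, h3, h4, h5, h6⟩ := hbound k
    constructor
    · refine ⟨?_, ?_, ?_⟩ <;> simp only <;> nlinarith [hDpos]
    · refine ⟨?_, ?_, ?_⟩ <;> simp only <;> nlinarith [hDpos]
  obtain ⟨k, -, l, -, hkl, hteq⟩ := Set.infinite_univ.exists_ne_map_eq_of_mapsTo
    (f := fun k : ℕ => ceilTri ω t0 k) (fun k _ => hmaps k) (Set.finite_Icc _ _)
  have hkey : ∀ k l : ℕ, k < l → ceilTri ω t0 k = ceilTri ω t0 l →
      ∃ p : ℕ, 1 ≤ p ∧ ceilingMap^[p] ω = ω := by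
    clear hkl hteq k l
    intro k l hkl hteq
    -- om k = om l
    have hAk : ((ceilTri ω t0 k).1:ℝ) ≠ 0 := Int.cast_ne_zero.mpr (hinv k).2.2.1
    have hqyk := (hspec k).2.1
    have hqk := (hinv k).2.2.2
    have hql := (hinv l).2.2.2
    rw [← hteq] at hql
    have hr1 := other_root_eq hAk hqyk hqk (fun h => (hspec k).2.2 h.symm)
    have hr2 := other_root_eq hAk hqyk hql
      (by
        intro h
        have h1 : ceilingMap^[l] ω < 1 := (hinv l).2.1.2
        have h2 : 1 < ceilConj ω t0 k := (hext k).1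
        rw [h] at h1
        linarith)
    have homkl : om k = om l := by
      show ceilingMap^[k] ω = ceilingMap^[l] ω
      rw [hr1, hr2]
    have hykl : y k = y l := by
      simp only [hydef, ceilConj]
      rw [hteq, show ceilingMap^[k] ω = ceilingMap^[l] ω from homkl]
    set p := l - k with hpdef
    have hp : 1 ≤ p := by omega
    have hlkp : k + p = l := by omega
    have hclaim : ∀ j, j ≤ k → (om (k - j) = om (k - j + p) ∧ y (k - j) = y (k - j + p)) := by
      intro j hj
      induction j with
      | zero =>
        simp only [Nat.sub_zero]
        rw [hlkp]
        exact ⟨homkl, hykl⟩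
      | succ j ih =>
        obtain ⟨ho, hy'⟩ := ih (by omega)
        set m := k - (j+1) with hm
        have hkj : k - j = m + 1 := by omega
        rw [hkj] at ho hy'
        have hidx : m + 1 + p = (m + p) + 1 := by omega
        rw [hidx] at ho hy'
        have hyq1 := hys m
        have hyq2 := hys (m + p)
        have ho1 := homs m
        have ho2 := homs (m + p)
        have hy1 := (hext m).1
        have hy2 := (hext (m+p)).1
        have e1a : (0:ℝ) < 1 / y m := by positivity
        have e1b : 1 / y m < 1 := by rw [div_lt_one (by linarith)]; linarith
        have e2a : (0:ℝ) < 1 / y (m+p) := by positivity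
        have e2b : 1 / y (m+p) < 1 := by rw [div_lt_one (by linarith)]; linarith
        have hcast : ((⌈1/(om m)⌉ - ⌈1/(om (m+p))⌉ : ℤ) : ℝ) = 1/y m - 1/y (m+p) := by
          push_cast
          linear_combination hy' - hyq1 + hyq2
        have habs : |((⌈1/(om m)⌉ - ⌈1/(om (m+p))⌉ : ℤ) : ℝ)| < 1 := by
          rw [hcast, abs_lt]
          constructor <;> linarith
        have hnn : (⌈1/(om m)⌉ : ℤ) = ⌈1/(om (m+p))⌉ := by
          have : |(⌈1/(om m)⌉ - ⌈1/(om (m+p))⌉ : ℤ)| < 1 := by exact_mod_cast habs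
          rw [abs_lt] at this
          omega
        have hc : ((⌈1/(om m)⌉:ℤ):ℝ) = ((⌈1/(om (m+p))⌉:ℤ):ℝ) := by exact_mod_cast hnn
        have hxm := (hinv m).2.1.1
        have hxmp := (hinv (m+p)).2.1.1
        have hinvx : 1/(om m) = 1/(om (m+p)) := by
          linear_combination ho1 - ho2 - ho + hc
        have hinvy : 1/(y m) = 1/(y (m+p)) := by
          linear_combination hyq1 - hyq2 - hy' + hc
        have homm : om m = om (m + p) := by
          have h1 : om m ≠ 0 := ne_of_gt hxm
          have h2 : om (m+p) ≠ 0 := ne_of_gt hxmp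
          field_simp at hinvx
          linarith
        have hym : y m = y (m + p) := by
          have h1 : y m ≠ 0 := by intro h; rw [h] at hy1; norm_num at hy1
          have h2 : y (m+p) ≠ 0 := by intro h; rw [h] at hy2; norm_num at hy2
          field_simp at hinvy
          linarith
        exact ⟨homm, hym⟩
    obtain ⟨ho, -⟩ := hclaim k le_rfl
    rw [Nat.sub_self] at ho
    refine ⟨p, hp, ?_⟩
    have h1 : om p = om 0 := by simpa using ho.symm
    simpa [homdef] using h1
  rcases hkl.lt_or_gt with h | h
  · exact hkey k l h hteq
  · exact hkey l k h hteq.symm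

/-- A quadratic irrational `ω ∈ (0,1)` is purely periodic under the Ceiling map iff its
Galois conjugate `ω' = -b/a - ω` satisfies `ω' > 1`. -/
theorem ceiling_purely_periodic_iff
    (ω : ℝ) (hmem : ω ∈ Set.Ioo (0 : ℝ) 1) (hirr : Irrational ω)
    (a b c : ℤ) (ha : a ≠ 0)
    (hroot : (a : ℝ) * ω ^ 2 + (b : ℝ) * ω + (c : ℝ) = 0) :
    (∃ p : ℕ, 1 ≤ p ∧ ceilingMap^[p] ω = ω) ↔ 1 < -(b : ℝ) / (a : ℝ) - ω := by
  constructor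
  · rintro ⟨p, hp, hper⟩
    exact forward_dir ω hmem hirr a b c ha hroot p hp hper
  · intro h
    exact backward_dir ω hmem hirr a b c ha hroot h
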